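/- For a finitary multiple-conclusion deductive system, the general cut condition (if Γ∪Π ⊢ Λ∪Δ for every partition Π∪Λ = Ξ of an arbitrary set Ξ, then Γ ⊢ Δ) is equivalent to the single-formula cut rule: if Γ∪{φ} ⊢ Δ and Γ ⊢ {φ}∪Δ, then Γ ⊢ Δ. -/

import Mathlib

/-- A multiple-conclusion consequence relation (reflexivity and monotonicity only;
the cut conditions are discussed separately). -/
structure MCConsequence (F : Type*) where
  Thm : Set F → Set F → Prop
  refl : ∀ φ : F, Thm {φ} {φ}
  mono : ∀ {Γ Γ' Δ Δ' : Set F}, Thm Γ Δ → Γ ⊆ Γ' → Δ ⊆ Δ' → Thm Γ' Δ'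

/-- Finitarity for multiple-conclusion systems. -/
def MCConsequence.Finitary {F : Type*} (L : MCConsequence F) : Prop :=
  ∀ (Γ Δ : Set F), L.Thm Γ Δ →
    ∃ Γ' ⊆ Γ, ∃ Δ' ⊆ Δ, Γ'.Finite ∧ Δ'.Finite ∧ L.Thm Γ' Δ'

/-- The general cut condition: if `Γ ∪ Π ⊢ Λ ∪ Δ` for every partition `Π ∪ Λ = Ξ`,
then `Γ ⊢ Δ`. -/
def MCConsequence.GeneralCut {F : Type*} (L : MCConsequence F) : Prop :=
  ∀ (Γ Δ Ξ : Set F),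
    (∀ P Q : Set F, P ∪ Q = Ξ → L.Thm (Γ ∪ P) (Q ∪ Δ)) → L.Thm Γ Δ

/-- The single-formula cut rule. -/
def MCConsequence.SingleCut {F : Type*} (L : MCConsequence F) : Prop :=
  ∀ (Γ Δ : Set F) (φ : F), L.Thm (Γ ∪ {φ}) Δ → L.Thm Γ ({φ} ∪ Δ) → L.Thm Γ Δ

section
variable {F : Type*}

/-- Left component of a tagged set. -/
def tagP (s : Set (Bool × F)) : Set F := {x | (true, x) ∈ s}
/-- Right component of a tagged set. -/
def tagQ (s : Set (Bool × F)) : Set F := {x | (false, x) ∈ s}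

end

/-- For a finitary multiple-conclusion deductive system, the general cut condition is
equivalent to the single-formula cut rule. -/
theorem generalCut_iff_singleCut {F : Type*} (L : MCConsequence F)
    (hfin : L.Finitary) : L.GeneralCut ↔ L.SingleCut := by
  constructor
  · intro hgc Γ Δ φ h1 h2
    apply hgc Γ Δ {φ}
    intro P Q hPQ
    by_cases hφ : φ ∈ P
    · exact L.mono h1 (Set.union_subset_union_right Γ (Set.singleton_subset_iff.2 hφ))
        Set.subset_union_right
    · have hφQ : φ ∈ Q := by
        have : φ ∈ P ∪ Q := hPQ ▸ rfl
        rcases this with h | h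
        · exact absurd h hφ
        · exact h
      exact L.mono h2 Set.subset_union_left
        (Set.union_subset (Set.singleton_subset_iff.2 (Or.inl hφQ)) Set.subset_union_right)
  · intro hsc Γ Δ Ξ h
    by_contra hnot
    set S : Set (Set (Bool × F)) :=
      {s | tagP s ⊆ Ξ ∧ tagQ s ⊆ Ξ ∧ ¬ L.Thm (Γ ∪ tagP s) (tagQ s ∪ Δ)} with hS
    have hempty : (∅ : Set (Bool × F)) ∈ S := by
      refine ⟨?_, ?_, ?_⟩
      · intro x hx; exact absurd hx (Set.notMem_empty _)
      · intro x hx; exact absurd hx (Set.notMem_empty _)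
      · have hP : tagP (∅ : Set (Bool × F)) = ∅ := rfl
        have hQ : tagQ (∅ : Set (Bool × F)) = ∅ := rfl
        rw [hP, hQ, Set.union_empty, Set.empty_union]
        exact hnot
    have hub : ∀ c ⊆ S, IsChain (· ⊆ ·) c → c.Nonempty →
        ∃ ub ∈ S, ∀ s ∈ c, s ⊆ ub := by
      intro c hcS hchain hcne
      refine ⟨⋃₀ c, ⟨?_, ?_, ?_⟩, fun s hs => Set.subset_sUnion_of_mem hs⟩
      · intro x hx
        obtain ⟨t, htc, hxt⟩ := hx
        exact (hcS htc).1 hxt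
      · intro x hx
        obtain ⟨t, htc, hxt⟩ := hx
        exact (hcS htc).2.1 hxt
      · intro hthm
        obtain ⟨Γ', hΓ', Δ', hΔ', hΓf, hΔf, hthm'⟩ := hfin _ _ hthm
        -- tagged finite set
        set t : Set (Bool × F) :=
          (Prod.mk true '' (Γ' \ Γ)) ∪ (Prod.mk false '' (Δ' \ Δ)) with ht
        have htf : t.Finite := ((hΓf.diff : (Γ' \ Γ).Finite).image _).union ((hΔf.diff : (Δ' \ Δ).Finite).image _)
        have hts : t ⊆ ⋃₀ c := by
          rintro p (⟨y, ⟨hy1, hy2⟩, rfl⟩ | ⟨y, ⟨hy1, hy2⟩, rfl⟩)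
          · rcases hΓ' hy1 with hx | hx
            · exact absurd hx hy2
            · exact hx
          · rcases hΔ' hy1 with hx | hx
            · exact hx
            · exact absurd hx hy2
        have hdir : DirectedOn (fun i j : Set (Bool × F) => id i ⊆ id j) c := by
          intro a ha b hb
          rcases hchain.total ha hb with hab | hba
          · exact ⟨b, hb, hab, subset_rfl⟩
          · exact ⟨a, ha, subset_rfl, hba⟩
        obtain ⟨i, hic, hti⟩ :=
          hdir.exists_mem_subset_of_finset_subset_biUnion hcne
            (s := htf.toFinset)
            (by simpa only [id, ← Set.sUnion_eq_biUnion, Set.Finite.coe_toFinset] using hts)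
        rw [Set.Finite.coe_toFinset] at hti
        apply (hcS hic).2.2
        apply L.mono hthm'
        · intro x hx
          by_cases hxΓ : x ∈ Γ
          · exact Or.inl hxΓ
          · exact Or.inr (hti (Or.inl ⟨x, ⟨hx, hxΓ⟩, rfl⟩))
        · intro x hx
          by_cases hxΔ : x ∈ Δ
          · exact Or.inr hxΔ
          · exact Or.inl (hti (Or.inr ⟨x, ⟨hx, hxΔ⟩, rfl⟩))
    obtain ⟨m, -, hmax⟩ := zorn_subset_nonempty S hub ∅ hempty
    -- m is maximal; show tagP m ∪ tagQ m = Ξ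
    obtain ⟨hPΞ, hQΞ, hnthm⟩ := hmax.1
    have hcover : tagP m ∪ tagQ m = Ξ := by
      apply Set.Subset.antisymm (Set.union_subset hPΞ hQΞ)
      intro φ hφΞ
      by_contra hφ
      have hφP : φ ∉ tagP m := fun hh => hφ (Or.inl hh)
      have hφQ : φ ∉ tagQ m := fun hh => hφ (Or.inr hh)
      -- extend with (true, φ)
      have h1 : L.Thm ((Γ ∪ tagP m) ∪ {φ}) (tagQ m ∪ Δ) := by
        by_contra hne
        have hmem : m ∪ {(true, φ)} ∈ S := by
          refine ⟨?_, ?_, ?_⟩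
          · rintro x (hx | hx)
            · exact hPΞ hx
            · rw [Set.mem_singleton_iff, Prod.mk.injEq] at hx
              exact hx.2 ▸ hφΞ
          · rintro x (hx | hx)
            · exact hQΞ hx
            · rw [Set.mem_singleton_iff, Prod.mk.injEq] at hx
              exact absurd hx.1 (by simp)
          · have hP' : tagP (m ∪ {(true, φ)}) = tagP m ∪ {φ} := by
              ext x
              simp [tagP, Set.mem_union, Prod.ext_iff]
            have hQ' : tagQ (m ∪ {(true, φ)}) = tagQ m := by
              ext x
              simp [tagQ, Set.mem_union, Prod.ext_iff]
            rw [hP', hQ', ← Set.union_assoc]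
            exact hne
        have := hmax.2 hmem Set.subset_union_left
        have : (true, φ) ∈ m := this (Or.inr rfl)
        exact hφP this
      have h2 : L.Thm (Γ ∪ tagP m) ({φ} ∪ (tagQ m ∪ Δ)) := by
        by_contra hne
        have hmem : m ∪ {(false, φ)} ∈ S := by
          refine ⟨?_, ?_, ?_⟩
          · rintro x (hx | hx)
            · exact hPΞ hx
            · rw [Set.mem_singleton_iff, Prod.mk.injEq] at hx
              exact absurd hx.1 (by simp)
          · rintro x (hx | hx)
            · exact hQΞ hx
            · rw [Set.mem_singleton_iff, Prod.mk.injEq] at hx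
              exact hx.2 ▸ hφΞ
          · have hP' : tagP (m ∪ {(false, φ)}) = tagP m := by
              ext x
              simp [tagP, Set.mem_union, Prod.ext_iff]
            have hQ' : tagQ (m ∪ {(false, φ)}) = {φ} ∪ tagQ m := by
              ext x
              simp [tagQ, Set.mem_union, Prod.ext_iff, or_comm]
            rw [hP', hQ', Set.union_assoc]
            exact hne
        have := hmax.2 hmem Set.subset_union_left
        have : (false, φ) ∈ m := this (Or.inr rfl)
        exact hφQ this
      exact hnthm (hsc _ _ φ h1 h2)
    exact hnthm (h _ _ hcover)
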